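/- The conditional Mean Flow loss decomposes as L_CMF(θ) = L_MF(θ) + 𝔼[‖(z₁ − z₀) − v_s(z_s)‖²], where the second term does not depend on the parameters θ; consequently ∇_θ L_CMF = ∇_θ L_MF, i.e., the two losses have identical gradients with respect to the model parameters. -/

import Mathlib

open MeasureTheory ProbabilityTheory

noncomputable section

attribute [local instance] MeasureTheory.Measure.isFiniteMeasure_map

/-- Euclidean space `ℝ^d`. -/
abbrev Euc (d : ℕ) := EuclideanSpace ℝ (Fin d)

/-- Joint law of `(z_s, z₁ - z₀)` for the straight-line interpolant. -/
def interpJoint {d : ℕ} (ρ₀ ρ₁ : Measure (Euc d)) (s : ℝ) : Measure (Euc d × Euc d) :=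
  (ρ₀.prod ρ₁).map (fun q => ((1 - s) • q.1 + s • q.2, q.2 - q.1))

instance {d : ℕ} (ρ₀ ρ₁ : Measure (Euc d)) [IsFiniteMeasure ρ₀] [IsFiniteMeasure ρ₁]
    (s : ℝ) : IsFiniteMeasure (interpJoint ρ₀ ρ₁ s) :=
  Measure.isFiniteMeasure_map _ _

/-- The marginal velocity `v_s(z) = 𝔼[z₁ - z₀ | z_s = z]`. -/
def margVel {d : ℕ} (ρ₀ ρ₁ : Measure (Euc d)) [IsProbabilityMeasure ρ₀]
    [IsProbabilityMeasure ρ₁] (s : ℝ) (z : Euc d) : Euc d :=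
  ∫ w, w ∂((interpJoint ρ₀ ρ₁ s).condKernel z)

/-- Total derivative `(d/ds) u(z_s, r, s) = (∂u/∂z) v_s(z_s) + ∂u/∂s` along the flow. -/
def totalDeriv {d : ℕ} (u : Euc d → ℝ → ℝ → Euc d) (v : ℝ → Euc d → Euc d)
    (z : Euc d) (r s : ℝ) : Euc d :=
  fderiv ℝ (fun w => u w r s) z (v s z) + deriv (fun τ => u z r τ) s

/-- A sample point `ω = ((z₀, z₁), (r, s))`. -/
abbrev Sample (d : ℕ) := (Euc d × Euc d) × ℝ × ℝ

/-- The interpolant `z_s = (1 − s) z₀ + s z₁` evaluated at a sample point. -/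
def zsOf {d : ℕ} (ω : Sample d) : Euc d := (1 - ω.2.2) • ω.1.1 + ω.2.2 • ω.1.2

/-- The Mean Flow loss `L_MF(θ; θ̄)`, where the stop-gradient is modeled by evaluating
the target at an independent parameter copy `θ̄` (which is not differentiated). -/
def lossMF {d : ℕ} {Θ : Type*} (ρ₀ ρ₁ : Measure (Euc d)) [IsProbabilityMeasure ρ₀]
    [IsProbabilityMeasure ρ₁] (π : Measure (ℝ × ℝ))
    (u : Θ → Euc d → ℝ → ℝ → Euc d) (θ θsg : Θ) : ℝ :=
  ∫ ω : Sample d,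
    ‖u θ (zsOf ω) ω.2.1 ω.2.2 - (margVel ρ₀ ρ₁ ω.2.2 (zsOf ω)
      - (ω.2.2 - ω.2.1) • totalDeriv (u θsg) (margVel ρ₀ ρ₁) (zsOf ω) ω.2.1 ω.2.2)‖ ^ 2
    ∂((ρ₀.prod ρ₁).prod π)

/-- The conditional Mean Flow loss `L_CMF(θ; θ̄)`, with the stop-gradient modeled by an
independent parameter copy `θ̄`. -/
def lossCMF {d : ℕ} {Θ : Type*} (ρ₀ ρ₁ : Measure (Euc d)) [IsProbabilityMeasure ρ₀]
    [IsProbabilityMeasure ρ₁] (π : Measure (ℝ × ℝ))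
    (u : Θ → Euc d → ℝ → ℝ → Euc d) (θ θsg : Θ) : ℝ :=
  ∫ ω : Sample d,
    ‖u θ (zsOf ω) ω.2.1 ω.2.2 - ((ω.1.2 - ω.1.1)
      - (ω.2.2 - ω.2.1) • totalDeriv (u θsg) (margVel ρ₀ ρ₁) (zsOf ω) ω.2.1 ω.2.2)‖ ^ 2
    ∂((ρ₀.prod ρ₁).prod π)

/-! ### Auxiliary definitions and lemmas -/

/-- The Mean Flow residual. -/
def resMF {d : ℕ} {Θ : Type*} (ρ₀ ρ₁ : Measure (Euc d)) [IsProbabilityMeasure ρ₀]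
    [IsProbabilityMeasure ρ₁] (u : Θ → Euc d → ℝ → ℝ → Euc d) (θ θsg : Θ)
    (ω : Sample d) : Euc d :=
  u θ (zsOf ω) ω.2.1 ω.2.2 - (margVel ρ₀ ρ₁ ω.2.2 (zsOf ω)
      - (ω.2.2 - ω.2.1) • totalDeriv (u θsg) (margVel ρ₀ ρ₁) (zsOf ω) ω.2.1 ω.2.2)

/-- The conditional residual `(z₁ - z₀) - v_s(z_s)`. -/
def resB {d : ℕ} (ρ₀ ρ₁ : Measure (Euc d)) [IsProbabilityMeasure ρ₀]
    [IsProbabilityMeasure ρ₁] (ω : Sample d) : Euc d :=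
  (ω.1.2 - ω.1.1) - margVel ρ₀ ρ₁ ω.2.2 (zsOf ω)

lemma margVel_measurable {d : ℕ} (ρ₀ ρ₁ : Measure (Euc d)) [IsProbabilityMeasure ρ₀]
    [IsProbabilityMeasure ρ₁] (s : ℝ) : Measurable (margVel ρ₀ ρ₁ s) :=
  ((measurable_snd.stronglyMeasurable
    (f := fun p : Euc d × Euc d => p.2)).integral_kernel_prod_right'
    (κ := (interpJoint ρ₀ ρ₁ s).condKernel)).measurable

lemma totalDeriv_measurable {d : ℕ} (u : Euc d → ℝ → ℝ → Euc d)
    (hu : ContDiff ℝ 1 (fun p : Euc d × ℝ × ℝ => u p.1 p.2.1 p.2.2))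
    (v : ℝ → Euc d → Euc d) (r s : ℝ) (hv : Measurable (v s)) :
    Measurable (fun z => totalDeriv u v z r s) := by
  set F : Euc d × ℝ × ℝ → Euc d := fun p => u p.1 p.2.1 p.2.2 with hF
  have h1 : ContDiff ℝ 1 (fun w : Euc d => u w r s) :=
    hu.comp ((contDiff_id (E := Euc d)).prodMk (contDiff_const (c := ((r, s) : ℝ × ℝ))))
  have hc1 : Continuous (fderiv ℝ (fun w : Euc d => u w r s)) :=
    h1.continuous_fderiv one_ne_zero
  have hA : Measurable (fun z => fderiv ℝ (fun w : Euc d => u w r s) z (v s z)) := by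
    have hp : Measurable (fun z =>
        ((fderiv ℝ (fun w : Euc d => u w r s) z, v s z) :
          (Euc d →L[ℝ] Euc d) × Euc d)) := hc1.measurable.prodMk hv
    exact (isBoundedBilinearMap_apply.continuous.measurable).comp hp
  have hd : ∀ z : Euc d, deriv (fun τ => u z r τ) s
      = fderiv ℝ F (z, (r, s)) (0, (0, 1)) := by
    intro z
    have hF' : HasFDerivAt F (fderiv ℝ F (z, (r, s))) (z, (r, s)) :=
      (hu.differentiable one_ne_zero _).hasFDerivAt
    have hL : HasDerivAt (fun τ : ℝ => ((z, (r, τ)) : Euc d × ℝ × ℝ))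
        ((0 : Euc d), ((0 : ℝ), (1 : ℝ))) s :=
      (hasDerivAt_const s z).prodMk ((hasDerivAt_const s r).prodMk (hasDerivAt_id s))
    exact (hF'.comp_hasDerivAt s hL).deriv
  have hB : Measurable (fun z : Euc d => deriv (fun τ => u z r τ) s) := by
    simp_rw [hd]
    have hcf : Continuous (fun z : Euc d => fderiv ℝ F (z, (r, s))) :=
      (hu.continuous_fderiv one_ne_zero).comp (continuous_id.prodMk continuous_const)
    exact ((isBoundedBilinearMap_apply.continuous).comp
      (hcf.prodMk continuous_const)).measurable
  exact hA.add hB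

lemma integrable_id_of_sq {d : ℕ} (ρ : Measure (Euc d)) [IsProbabilityMeasure ρ]
    (hm : Integrable (fun z => ‖z‖ ^ 2) ρ) : Integrable (fun z : Euc d => z) ρ := by
  refine ((integrable_const (1 : ℝ)).add hm).mono'
    stronglyMeasurable_id.aestronglyMeasurable ?_
  filter_upwards with z
  have h : ‖z‖ ≤ 1 + ‖z‖ ^ 2 := by nlinarith [norm_nonneg z, sq_nonneg (‖z‖ - 1)]
  simpa using h

/-- The interpolation map defining `interpJoint`. -/
lemma interp_map_continuous {d : ℕ} (s : ℝ) :
    Continuous (fun q : Euc d × Euc d => ((1 - s) • q.1 + s • q.2, q.2 - q.1)) :=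
  Continuous.prodMk (f := fun q : Euc d × Euc d => (1 - s) • q.1 + s • q.2)
    (g := fun q : Euc d × Euc d => q.2 - q.1)
    (by fun_prop)
    (continuous_snd.sub continuous_fst)

lemma integrable_snd_interpJoint {d : ℕ} (ρ₀ ρ₁ : Measure (Euc d))
    [IsProbabilityMeasure ρ₀] [IsProbabilityMeasure ρ₁]
    (hm₀ : Integrable (fun z => ‖z‖ ^ 2) ρ₀) (hm₁ : Integrable (fun z => ‖z‖ ^ 2) ρ₁)
    (s : ℝ) : Integrable (fun x : Euc d × Euc d => x.2) (interpJoint ρ₀ ρ₁ s) := by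
  rw [interpJoint, integrable_map_measure measurable_snd.aestronglyMeasurable
    (interp_map_continuous s).measurable.aemeasurable]
  have hfst : Integrable (fun q : Euc d × Euc d => q.1) (ρ₀.prod ρ₁) := by
    have h0 := integrable_id_of_sq ρ₀ hm₀
    have hmap : (ρ₀.prod ρ₁).map Prod.fst = ρ₀ := by
      rw [Measure.map_fst_prod]; simp
    rw [← hmap] at h0
    exact (integrable_map_measure stronglyMeasurable_id.aestronglyMeasurable
      measurable_fst.aemeasurable).mp h0
  have hsnd : Integrable (fun q : Euc d × Euc d => q.2) (ρ₀.prod ρ₁) := by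
    have h1 := integrable_id_of_sq ρ₁ hm₁
    have hmap : (ρ₀.prod ρ₁).map Prod.snd = ρ₁ := by
      rw [Measure.map_snd_prod]; simp
    rw [← hmap] at h1
    exact (integrable_map_measure stronglyMeasurable_id.aestronglyMeasurable
      measurable_snd.aemeasurable).mp h1
  exact hsnd.sub hfst

/-- Conditional centering: the inner product of any function of `z_s` against the
centered velocity integrates to zero. -/
lemma integral_inner_centered {d : ℕ} (ρ₀ ρ₁ : Measure (Euc d))
    [IsProbabilityMeasure ρ₀] [IsProbabilityMeasure ρ₁]
    (hm₀ : Integrable (fun z => ‖z‖ ^ 2) ρ₀) (hm₁ : Integrable (fun z => ‖z‖ ^ 2) ρ₁)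
    (s : ℝ) (φ : Euc d → Euc d)
    (hgi : Integrable (fun x : Euc d × Euc d =>
      (inner ℝ (φ x.1) (x.2 - margVel ρ₀ ρ₁ s x.1) : ℝ)) (interpJoint ρ₀ ρ₁ s)) :
    ∫ x : Euc d × Euc d, (inner ℝ (φ x.1) (x.2 - margVel ρ₀ ρ₁ s x.1) : ℝ)
      ∂(interpJoint ρ₀ ρ₁ s) = 0 := by
  have hsnd := integrable_snd_interpJoint ρ₀ ρ₁ hm₀ hm₁ s
  simp only [margVel] at hgi ⊢
  rw [← Measure.integral_condKernel hgi]
  refine integral_eq_zero_of_ae ?_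
  filter_upwards [hsnd.condKernel_ae] with x hx
  have hsub : Integrable (fun y : Euc d =>
      y - ∫ w, w ∂(interpJoint ρ₀ ρ₁ s).condKernel x)
      ((interpJoint ρ₀ ρ₁ s).condKernel x) := hx.sub (integrable_const _)
  rw [integral_inner hsub, integral_sub hx (integrable_const _), integral_const]
  simp

end

noncomputable section

lemma cross_integral_zero {d : ℕ} {Θ : Type*} (ρ₀ ρ₁ : Measure (Euc d))
    [IsProbabilityMeasure ρ₀] [IsProbabilityMeasure ρ₁]
    (hm₀ : Integrable (fun z => ‖z‖ ^ 2) ρ₀) (hm₁ : Integrable (fun z => ‖z‖ ^ 2) ρ₁)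
    (π : Measure (ℝ × ℝ)) [IsProbabilityMeasure π]
    (u : Θ → Euc d → ℝ → ℝ → Euc d)
    (hu : ∀ θ, ContDiff ℝ 1 (fun p : Euc d × ℝ × ℝ => u θ p.1 p.2.1 p.2.2))
    (θ θsg : Θ)
    (hcross : Integrable (fun ω : Sample d =>
      (inner ℝ (resMF ρ₀ ρ₁ u θ θsg ω) (resB ρ₀ ρ₁ ω) : ℝ)) ((ρ₀.prod ρ₁).prod π)) :
    ∫ ω : Sample d, (inner ℝ (resMF ρ₀ ρ₁ u θ θsg ω) (resB ρ₀ ρ₁ ω) : ℝ)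
      ∂((ρ₀.prod ρ₁).prod π) = 0 := by
  rw [integral_prod_symm _ hcross]
  refine integral_eq_zero_of_ae ?_
  filter_upwards [hcross.prod_left_ae] with p hp
  let φ : Euc d → Euc d := fun z => u θ z p.1 p.2 - (margVel ρ₀ ρ₁ p.2 z
    - (p.2 - p.1) • totalDeriv (u θsg) (margVel ρ₀ ρ₁) z p.1 p.2)
  let m : Euc d × Euc d → Euc d × Euc d :=
    fun q => ((1 - p.2) • q.1 + p.2 • q.2, q.2 - q.1)
  let g : Euc d × Euc d → ℝ := fun x => inner ℝ (φ x.1) (x.2 - margVel ρ₀ ρ₁ p.2 x.1)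
  have hrepr : ∀ q : Euc d × Euc d,
      (inner ℝ (resMF ρ₀ ρ₁ u θ θsg (q, p)) (resB ρ₀ ρ₁ (q, p)) : ℝ) = g (m q) :=
    fun q => rfl
  have hφm : Measurable φ := by
    have hum : Continuous (fun z : Euc d => u θ z p.1 p.2) :=
      (hu θ).continuous.comp
        ((continuous_id (X := Euc d)).prodMk (continuous_const (y := (p.1, p.2))))
    exact hum.measurable.sub ((margVel_measurable ρ₀ ρ₁ p.2).sub
      ((totalDeriv_measurable (u θsg) (hu θsg) (margVel ρ₀ ρ₁) p.1 p.2
        (margVel_measurable ρ₀ ρ₁ p.2)).const_smul (p.2 - p.1)))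
  have hgm : Measurable g :=
    (hφm.comp measurable_fst).inner
      (measurable_snd.sub ((margVel_measurable ρ₀ ρ₁ p.2).comp measurable_fst))
  have hgi : Integrable g (interpJoint ρ₀ ρ₁ p.2) := by
    rw [interpJoint, integrable_map_measure hgm.aestronglyMeasurable
      (interp_map_continuous p.2).measurable.aemeasurable]
    have hcomp : (g ∘ m) = fun q : Euc d × Euc d =>
        (inner ℝ (resMF ρ₀ ρ₁ u θ θsg (q, p)) (resB ρ₀ ρ₁ (q, p)) : ℝ) :=
      funext fun q => (hrepr q).symm
    rw [hcomp]; exact hp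
  calc ∫ q : Euc d × Euc d,
        (inner ℝ (resMF ρ₀ ρ₁ u θ θsg (q, p)) (resB ρ₀ ρ₁ (q, p)) : ℝ) ∂(ρ₀.prod ρ₁)
      = ∫ q : Euc d × Euc d, g (m q) ∂(ρ₀.prod ρ₁) := by simp only [hrepr]
    _ = ∫ x, g x ∂(interpJoint ρ₀ ρ₁ p.2) := by
        rw [interpJoint, integral_map (interp_map_continuous p.2).measurable.aemeasurable
          hgm.aestronglyMeasurable]
    _ = 0 := integral_inner_centered ρ₀ ρ₁ hm₀ hm₁ p.2 φ hgi

end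

noncomputable section

/-- Proposition: the CMF and MF losses differ by a θ-independent
constant, hence have identical gradients in θ.
`L_CMF(θ) = L_MF(θ) + 𝔼‖(z₁ − z₀) − v_s(z_s)‖²`, and `∇_θ L_CMF = ∇_θ L_MF`, where the
stop-gradient is modeled by holding the parameter copy `θ̄` in the target fixed. -/
theorem stmt2 {d : ℕ} {Θ : Type*} [NormedAddCommGroup Θ] [NormedSpace ℝ Θ]
    (ρ₀ ρ₁ : Measure (Euc d)) [IsProbabilityMeasure ρ₀] [IsProbabilityMeasure ρ₁]
    (hm₀ : Integrable (fun z => ‖z‖ ^ 2) ρ₀) (hm₁ : Integrable (fun z => ‖z‖ ^ 2) ρ₁)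
    (π : Measure (ℝ × ℝ)) [IsProbabilityMeasure π]
    (u : Θ → Euc d → ℝ → ℝ → Euc d)
    (hu : ∀ θ, ContDiff ℝ 1 (fun p : Euc d × ℝ × ℝ => u θ p.1 p.2.1 p.2.2))
    (huθ : ∀ ω : Sample d, Differentiable ℝ (fun θ => u θ (zsOf ω) ω.2.1 ω.2.2))
    (hintMF : ∀ θ θsg : Θ, Integrable (fun ω : Sample d =>
      ‖u θ (zsOf ω) ω.2.1 ω.2.2 - (margVel ρ₀ ρ₁ ω.2.2 (zsOf ω)
        - (ω.2.2 - ω.2.1) • totalDeriv (u θsg) (margVel ρ₀ ρ₁) (zsOf ω) ω.2.1 ω.2.2)‖ ^ 2)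
      ((ρ₀.prod ρ₁).prod π))
    (hintCMF : ∀ θ θsg : Θ, Integrable (fun ω : Sample d =>
      ‖u θ (zsOf ω) ω.2.1 ω.2.2 - ((ω.1.2 - ω.1.1)
        - (ω.2.2 - ω.2.1) • totalDeriv (u θsg) (margVel ρ₀ ρ₁) (zsOf ω) ω.2.1 ω.2.2)‖ ^ 2)
      ((ρ₀.prod ρ₁).prod π))
    (hintRes : Integrable (fun ω : Sample d =>
      ‖(ω.1.2 - ω.1.1) - margVel ρ₀ ρ₁ ω.2.2 (zsOf ω)‖ ^ 2) ((ρ₀.prod ρ₁).prod π)) :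
    (∀ θ θsg : Θ, lossCMF ρ₀ ρ₁ π u θ θsg = lossMF ρ₀ ρ₁ π u θ θsg
        + ∫ ω : Sample d, ‖(ω.1.2 - ω.1.1) - margVel ρ₀ ρ₁ ω.2.2 (zsOf ω)‖ ^ 2
            ∂((ρ₀.prod ρ₁).prod π)) ∧
    (∀ θ θsg : Θ, fderiv ℝ (fun ϑ => lossCMF ρ₀ ρ₁ π u ϑ θsg) θ
        = fderiv ℝ (fun ϑ => lossMF ρ₀ ρ₁ π u ϑ θsg) θ) := by
  have main : ∀ θ θsg : Θ, lossCMF ρ₀ ρ₁ π u θ θsg = lossMF ρ₀ ρ₁ π u θ θsg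
      + ∫ ω : Sample d, ‖(ω.1.2 - ω.1.1) - margVel ρ₀ ρ₁ ω.2.2 (zsOf ω)‖ ^ 2
          ∂((ρ₀.prod ρ₁).prod π) := by
    intro θ θsg
    have hA2 : Integrable (fun ω : Sample d => ‖resMF ρ₀ ρ₁ u θ θsg ω‖ ^ 2)
        ((ρ₀.prod ρ₁).prod π) := hintMF θ θsg
    have hB2 : Integrable (fun ω : Sample d => ‖resB ρ₀ ρ₁ ω‖ ^ 2)
        ((ρ₀.prod ρ₁).prod π) := hintRes
    have hABsub : ∀ ω : Sample d, u θ (zsOf ω) ω.2.1 ω.2.2 - ((ω.1.2 - ω.1.1)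
        - (ω.2.2 - ω.2.1) • totalDeriv (u θsg) (margVel ρ₀ ρ₁) (zsOf ω) ω.2.1 ω.2.2)
        = resMF ρ₀ ρ₁ u θ θsg ω - resB ρ₀ ρ₁ ω := by
      intro ω; simp only [resMF, resB]; abel
    have hAB2 : Integrable (fun ω : Sample d =>
        ‖resMF ρ₀ ρ₁ u θ θsg ω - resB ρ₀ ρ₁ ω‖ ^ 2) ((ρ₀.prod ρ₁).prod π) := by
      have h := hintCMF θ θsg; simp only [hABsub] at h; exact h
    have hcross : Integrable (fun ω : Sample d =>
        (inner ℝ (resMF ρ₀ ρ₁ u θ θsg ω) (resB ρ₀ ρ₁ ω) : ℝ)) ((ρ₀.prod ρ₁).prod π) := by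
      have heq : (fun ω : Sample d => (inner ℝ (resMF ρ₀ ρ₁ u θ θsg ω) (resB ρ₀ ρ₁ ω) : ℝ))
          = fun ω => (‖resMF ρ₀ ρ₁ u θ θsg ω‖ ^ 2 + ‖resB ρ₀ ρ₁ ω‖ ^ 2
            - ‖resMF ρ₀ ρ₁ u θ θsg ω - resB ρ₀ ρ₁ ω‖ ^ 2) / 2 := by
        funext ω; rw [norm_sub_sq_real]; ring
      rw [heq]; exact ((hA2.add hB2).sub hAB2).div_const 2
    have hkey : ∫ ω : Sample d, (inner ℝ (resMF ρ₀ ρ₁ u θ θsg ω) (resB ρ₀ ρ₁ ω) : ℝ)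
        ∂((ρ₀.prod ρ₁).prod π) = 0 :=
      cross_integral_zero ρ₀ ρ₁ hm₀ hm₁ π u hu θ θsg hcross
    have hexp : ∀ ω : Sample d, ‖resMF ρ₀ ρ₁ u θ θsg ω - resB ρ₀ ρ₁ ω‖ ^ 2
        = ‖resMF ρ₀ ρ₁ u θ θsg ω‖ ^ 2
          - 2 * (inner ℝ (resMF ρ₀ ρ₁ u θ θsg ω) (resB ρ₀ ρ₁ ω) : ℝ)
          + ‖resB ρ₀ ρ₁ ω‖ ^ 2 := fun ω => norm_sub_sq_real _ _
    have hL : lossCMF ρ₀ ρ₁ π u θ θsg = ∫ ω : Sample d,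
        (‖resMF ρ₀ ρ₁ u θ θsg ω‖ ^ 2
          - 2 * (inner ℝ (resMF ρ₀ ρ₁ u θ θsg ω) (resB ρ₀ ρ₁ ω) : ℝ)
          + ‖resB ρ₀ ρ₁ ω‖ ^ 2) ∂((ρ₀.prod ρ₁).prod π) := by
      simp only [lossCMF, hABsub, hexp]
    have h2 : Integrable (fun ω : Sample d =>
        2 * (inner ℝ (resMF ρ₀ ρ₁ u θ θsg ω) (resB ρ₀ ρ₁ ω) : ℝ)) ((ρ₀.prod ρ₁).prod π) :=
      hcross.const_mul 2
    have h1 : Integrable (fun ω : Sample d => ‖resMF ρ₀ ρ₁ u θ θsg ω‖ ^ 2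
        - 2 * (inner ℝ (resMF ρ₀ ρ₁ u θ θsg ω) (resB ρ₀ ρ₁ ω) : ℝ)) ((ρ₀.prod ρ₁).prod π) :=
      hA2.sub h2
    rw [hL, integral_add h1 hB2, integral_sub hA2 h2, integral_const_mul, hkey]
    simp only [lossMF]
    have : (fun ω : Sample d => ‖resMF ρ₀ ρ₁ u θ θsg ω‖ ^ 2)
        = fun ω : Sample d =>
          ‖u θ (zsOf ω) ω.2.1 ω.2.2 - (margVel ρ₀ ρ₁ ω.2.2 (zsOf ω)
            - (ω.2.2 - ω.2.1) • totalDeriv (u θsg) (margVel ρ₀ ρ₁) (zsOf ω) ω.2.1 ω.2.2)‖ ^ 2 :=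
      rfl
    rw [this]
    have hres : (fun ω : Sample d => ‖resB ρ₀ ρ₁ ω‖ ^ 2)
        = fun ω : Sample d => ‖(ω.1.2 - ω.1.1) - margVel ρ₀ ρ₁ ω.2.2 (zsOf ω)‖ ^ 2 := rfl
    rw [hres]; ring
  refine ⟨main, fun θ θsg => ?_⟩
  have h : (fun ϑ => lossCMF ρ₀ ρ₁ π u ϑ θsg) = fun ϑ => lossMF ρ₀ ρ₁ π u ϑ θsg
      + ∫ ω : Sample d, ‖(ω.1.2 - ω.1.1) - margVel ρ₀ ρ₁ ω.2.2 (zsOf ω)‖ ^ 2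
          ∂((ρ₀.prod ρ₁).prod π) := funext fun ϑ => main ϑ θsg
  rw [h, fderiv_add_const]

end
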